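/- Let X = {x, y} ⊆ ZS_n, with the 2×n matrix of rows x,y having a_1 columns (1,1)ᵀ, a_2 columns (1,-1)ᵀ, b_1 columns (1,0)ᵀ, b_2 columns (0,1)ᵀ, and c columns (0,0)ᵀ. Then the number of elements of ZS_n eliminated by x or by y equals 3^c·(3^(b_1)·2^(a_1+a_2+b_2) + 3^(b_2)·2^(a_1+a_2+b_1) - 2^(b_1+b_2)(2^(a_1)+2^(a_2)) - 3^(b_1) - 3^(b_2) + 2^(b_1+1) + 2^(b_2+1) - 2). -/

import Mathlib

/-- A vector with entries in {-1,0,1}. -/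
def IsSignVec {n : ℕ} (s : Fin n → ℤ) : Prop :=
  ∀ i, s i = -1 ∨ s i = 0 ∨ s i = 1

/-- `ZS n`: nonzero sign vectors whose first nonzero entry is `1`. -/
def ZS (n : ℕ) : Set (Fin n → ℤ) :=
  {s | IsSignVec s ∧ ∃ i, s i = 1 ∧ ∀ j, j < i → s j = 0}

/-- `t` eliminates `s`: their supports intersect and on the common support
`t` agrees with `s` or with `-s`. -/
def Eliminates {n : ℕ} (t s : Fin n → ℤ) : Prop :=
  (∃ i, t i ≠ 0 ∧ s i ≠ 0) ∧
  (∃ k : ℤ, (k = 1 ∨ k = -1) ∧ ∀ i, s i ≠ 0 → t i ≠ 0 → t i = k * s i)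

/-- the set of elements of `ZS n` eliminated by some element of `X`. -/
def ZE {n : ℕ} (X : Set (Fin n → ℤ)) : Set (Fin n → ℤ) :=
  {s ∈ ZS n | ∃ t ∈ X, Eliminates t s}

namespace Stmt13Aux

open Finset

def sgns : Finset ℤ := {-1, 0, 1}

lemma mem_sgns {a : ℤ} : a ∈ sgns ↔ a = -1 ∨ a = 0 ∨ a = 1 := by
  simp [sgns]

variable {n : ℕ}

def pS (g : ℤ → ℤ → Finset ℤ) (x y : Fin n → ℤ) : Finset (Fin n → ℤ) :=
  Fintype.piFinset fun i => g (x i) (y i)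

lemma mem_pS {g : ℤ → ℤ → Finset ℤ} {x y s : Fin n → ℤ} :
    s ∈ pS g x y ↔ ∀ i, s i ∈ g (x i) (y i) := Fintype.mem_piFinset

lemma pS_inter (g h : ℤ → ℤ → Finset ℤ) (x y : Fin n → ℤ) :
    pS (fun a b => g a b ∩ h a b) x y = pS g x y ∩ pS h x y := by
  ext s
  simp only [mem_pS, Finset.mem_inter, forall_and]

lemma pS_inter3 (g h f : ℤ → ℤ → Finset ℤ) (x y : Fin n → ℤ) :
    pS (fun a b => g a b ∩ h a b ∩ f a b) x y = pS g x y ∩ pS h x y ∩ pS f x y := by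
  ext s
  simp only [mem_pS, Finset.mem_inter, forall_and]

lemma pS_card (g : ℤ → ℤ → Finset ℤ) (x y : Fin n → ℤ) :
    (pS g x y).card = ∏ i, (g (x i) (y i)).card := Fintype.card_piFinset _

lemma pS_subset {g h : ℤ → ℤ → Finset ℤ} (x y : Fin n → ℤ) (H : ∀ a b, g a b ⊆ h a b) :
    pS g x y ⊆ pS h x y := Fintype.piFinset_subset _ _ fun i => H _ _

def gC (k a _b : ℤ) : Finset ℤ := if a = 0 then sgns else {0, k * a}
def gC' (k _a b : ℤ) : Finset ℤ := if b = 0 then sgns else {0, k * b}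
def gZ (a _b : ℤ) : Finset ℤ := if a = 0 then sgns else {0}
def gZ' (_a b : ℤ) : Finset ℤ := if b = 0 then sgns else {0}

lemma gC_subset_sgns {k a : ℤ} (hk : k = 1 ∨ k = -1) (ha : a = -1 ∨ a = 0 ∨ a = 1) (b : ℤ) :
    gC k a b ⊆ sgns := by
  unfold gC
  split_ifs with h
  · exact Finset.Subset.refl _
  · intro e he
    simp only [Finset.mem_insert, Finset.mem_singleton] at he
    rw [mem_sgns]
    rcases hk with rfl | rfl <;> rcases ha with rfl | rfl | rfl <;> omega

lemma gC'_subset_sgns {k b : ℤ} (hk : k = 1 ∨ k = -1) (hb : b = -1 ∨ b = 0 ∨ b = 1) (a : ℤ) :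
    gC' k a b ⊆ sgns := by
  unfold gC'
  split_ifs with h
  · exact Finset.Subset.refl _
  · intro e he
    simp only [Finset.mem_insert, Finset.mem_singleton] at he
    rw [mem_sgns]
    rcases hk with rfl | rfl <;> rcases hb with rfl | rfl | rfl <;> omega

lemma gZ_subset_gC (k : ℤ) (a b : ℤ) : gZ a b ⊆ gC k a b := by
  unfold gZ gC
  split_ifs with h
  · exact Finset.Subset.refl _
  · intro e he
    simp only [Finset.mem_singleton] at he
    simp [he]

lemma gZ'_subset_gC' (k : ℤ) (a b : ℤ) : gZ' a b ⊆ gC' k a b := by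
  unfold gZ' gC'
  split_ifs with h
  · exact Finset.Subset.refl _
  · intro e he
    simp only [Finset.mem_singleton] at he
    simp [he]

lemma neg_mem_sgns {e : ℤ} (h : e ∈ sgns) : -e ∈ sgns := by
  rw [mem_sgns] at h ⊢; omega

lemma neg_mem_gC {k a b e : ℤ} (h : e ∈ gC k a b) : -e ∈ gC (-k) a b := by
  unfold gC at h ⊢
  split_ifs at h ⊢ with ha
  · exact neg_mem_sgns h
  · simp only [Finset.mem_insert, Finset.mem_singleton] at h ⊢
    rcases h with rfl | rfl
    · left; ring
    · right; ring

lemma neg_mem_gC' {k a b e : ℤ} (h : e ∈ gC' k a b) : -e ∈ gC' (-k) a b := by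
  unfold gC' at h ⊢
  split_ifs at h ⊢ with ha
  · exact neg_mem_sgns h
  · simp only [Finset.mem_insert, Finset.mem_singleton] at h ⊢
    rcases h with rfl | rfl
    · left; ring
    · right; ring

lemma neg_mem_gZ {a b e : ℤ} (h : e ∈ gZ a b) : -e ∈ gZ a b := by
  unfold gZ at h ⊢
  split_ifs at h ⊢ with ha
  · exact neg_mem_sgns h
  · simp only [Finset.mem_singleton] at h ⊢; omega

lemma neg_mem_gZ' {a b e : ℤ} (h : e ∈ gZ' a b) : -e ∈ gZ' a b := by
  unfold gZ' at h ⊢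
  split_ifs at h ⊢ with ha
  · exact neg_mem_sgns h
  · simp only [Finset.mem_singleton] at h ⊢; omega

def posv (s : Fin n → ℤ) : Prop := ∃ i, s i = 1 ∧ ∀ j, j < i → s j = 0

lemma posv_not_both {s : Fin n → ℤ} (h1 : posv s) (h2 : posv (-s)) : False := by
  obtain ⟨i, hi, hi'⟩ := h1
  obtain ⟨j, hj, hj'⟩ := h2
  simp only [Pi.neg_apply] at hj hj'
  rcases lt_trichotomy i j with h | h | h
  · have := hj' i h; omega
  · subst h; omega
  · have := hi' j h; omega

lemma posv_total {s : Fin n → ℤ} (hs : IsSignVec s) (hne : ∃ i, s i ≠ 0) :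
    posv s ∨ posv (-s) := by
  classical
  obtain ⟨i₀, hi₀⟩ := hne
  have hF : (Finset.univ.filter fun i => s i ≠ 0).Nonempty := ⟨i₀, by simp [hi₀]⟩
  set m := (Finset.univ.filter fun i => s i ≠ 0).min' hF with hm
  have hmem : s m ≠ 0 := by
    have := Finset.min'_mem _ hF
    simpa using this
  have hlt : ∀ j, j < m → s j = 0 := by
    intro j hj
    by_contra hj0
    have : m ≤ j := Finset.min'_le _ _ (by simp [hj0])
    exact absurd this (not_le.2 hj)
  rcases hs m with h | h | h
  · right
    refine ⟨m, by simp [h], fun j hj => by simp [hlt j hj]⟩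
  · exact absurd h hmem
  · left; exact ⟨m, h, hlt⟩

lemma exists_ne_of_not_mem_pS_gZ {x y s : Fin n → ℤ} (hs : IsSignVec s) (h : s ∉ pS gZ x y) :
    ∃ i, x i ≠ 0 ∧ s i ≠ 0 := by
  by_contra hc
  push_neg at hc
  apply h
  rw [mem_pS]
  intro i
  unfold gZ
  split_ifs with h0
  · exact mem_sgns.2 (hs i)
  · simp [hc i h0]

lemma exists_ne_of_not_mem_pS_gZ' {x y s : Fin n → ℤ} (hs : IsSignVec s) (h : s ∉ pS gZ' x y) :
    ∃ i, y i ≠ 0 ∧ s i ≠ 0 := by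
  by_contra hc
  push_neg at hc
  apply h
  rw [mem_pS]
  intro i
  unfold gZ'
  split_ifs with h0
  · exact mem_sgns.2 (hs i)
  · simp [hc i h0]

lemma elim_x_iff {x y s : Fin n → ℤ} (hx : IsSignVec x) (hs : IsSignVec s) :
    Eliminates x s ↔ s ∈ (pS (gC 1) x y ∪ pS (gC (-1)) x y) \ pS gZ x y := by
  constructor
  · rintro ⟨⟨i, hxi, hsi⟩, ⟨k, hk, hall⟩⟩
    rw [Finset.mem_sdiff, Finset.mem_union]
    constructor
    · have hmem : s ∈ pS (gC k) x y := by
        rw [mem_pS]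
        intro j
        unfold gC
        split_ifs with hj
        · exact mem_sgns.2 (hs j)
        · simp only [Finset.mem_insert, Finset.mem_singleton]
          by_cases hsj : s j = 0
          · exact Or.inl hsj
          · have := hall j hsj hj
            rcases hk with rfl | rfl <;> [skip; skip] <;> right <;> omega
      rcases hk with rfl | rfl
      · exact Or.inl hmem
      · exact Or.inr hmem
    · intro hZ
      have := mem_pS.1 hZ i
      unfold gZ at this
      rw [if_neg hxi] at this
      simp only [Finset.mem_singleton] at this
      exact hsi this
  · intro hmem
    rw [Finset.mem_sdiff] at hmem
    obtain ⟨hU, hZ⟩ := hmem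
    obtain ⟨i, hxi, hsi⟩ := exists_ne_of_not_mem_pS_gZ hs hZ
    refine ⟨⟨i, hxi, hsi⟩, ?_⟩
    rw [Finset.mem_union] at hU
    rcases hU with h | h
    · refine ⟨1, Or.inl rfl, fun j hsj hxj => ?_⟩
      have := mem_pS.1 h j
      unfold gC at this
      rw [if_neg hxj] at this
      simp only [Finset.mem_insert, Finset.mem_singleton] at this
      rcases this with h' | h'
      · exact absurd h' hsj
      · omega
    · refine ⟨-1, Or.inr rfl, fun j hsj hxj => ?_⟩
      have := mem_pS.1 h j
      unfold gC at this
      rw [if_neg hxj] at this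
      simp only [Finset.mem_insert, Finset.mem_singleton] at this
      rcases this with h' | h'
      · exact absurd h' hsj
      · omega

lemma elim_y_iff {x y s : Fin n → ℤ} (hy : IsSignVec y) (hs : IsSignVec s) :
    Eliminates y s ↔ s ∈ (pS (gC' 1) x y ∪ pS (gC' (-1)) x y) \ pS gZ' x y := by
  constructor
  · rintro ⟨⟨i, hyi, hsi⟩, ⟨k, hk, hall⟩⟩
    rw [Finset.mem_sdiff, Finset.mem_union]
    constructor
    · have hmem : s ∈ pS (gC' k) x y := by
        rw [mem_pS]
        intro j
        unfold gC'
        split_ifs with hj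
        · exact mem_sgns.2 (hs j)
        · simp only [Finset.mem_insert, Finset.mem_singleton]
          by_cases hsj : s j = 0
          · exact Or.inl hsj
          · have := hall j hsj hj
            rcases hk with rfl | rfl <;> [skip; skip] <;> right <;> omega
      rcases hk with rfl | rfl
      · exact Or.inl hmem
      · exact Or.inr hmem
    · intro hZ
      have := mem_pS.1 hZ i
      unfold gZ' at this
      rw [if_neg hyi] at this
      simp only [Finset.mem_singleton] at this
      exact hsi this
  · intro hmem
    rw [Finset.mem_sdiff] at hmem
    obtain ⟨hU, hZ⟩ := hmem
    obtain ⟨i, hyi, hsi⟩ := exists_ne_of_not_mem_pS_gZ' hs hZ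
    refine ⟨⟨i, hyi, hsi⟩, ?_⟩
    rw [Finset.mem_union] at hU
    rcases hU with h | h
    · refine ⟨1, Or.inl rfl, fun j hsj hyj => ?_⟩
      have := mem_pS.1 h j
      unfold gC' at this
      rw [if_neg hyj] at this
      simp only [Finset.mem_insert, Finset.mem_singleton] at this
      rcases this with h' | h'
      · exact absurd h' hsj
      · omega
    · refine ⟨-1, Or.inr rfl, fun j hsj hyj => ?_⟩
      have := mem_pS.1 h j
      unfold gC' at this
      rw [if_neg hyj] at this
      simp only [Finset.mem_insert, Finset.mem_singleton] at this
      rcases this with h' | h'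
      · exact absurd h' hsj
      · omega

lemma pS_congr {g h : ℤ → ℤ → Finset ℤ} (x y : Fin n → ℤ) (H : ∀ a b, g a b = h a b) :
    pS g x y = pS h x y := by
  unfold pS
  congr 1
  funext i
  rw [H]

lemma neg_mem_pS_gC {x y s : Fin n → ℤ} {k : ℤ} (h : s ∈ pS (gC k) x y) :
    -s ∈ pS (gC (-k)) x y := by
  rw [mem_pS] at h ⊢
  intro i
  rw [Pi.neg_apply]
  exact neg_mem_gC (h i)

lemma neg_mem_pS_gC' {x y s : Fin n → ℤ} {k : ℤ} (h : s ∈ pS (gC' k) x y) :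
    -s ∈ pS (gC' (-k)) x y := by
  rw [mem_pS] at h ⊢
  intro i
  rw [Pi.neg_apply]
  exact neg_mem_gC' (h i)

lemma neg_mem_pS_gZ {x y s : Fin n → ℤ} (h : s ∈ pS gZ x y) : -s ∈ pS gZ x y := by
  rw [mem_pS] at h ⊢
  intro i
  rw [Pi.neg_apply]
  exact neg_mem_gZ (h i)

lemma neg_mem_pS_gZ' {x y s : Fin n → ℤ} (h : s ∈ pS gZ' x y) : -s ∈ pS gZ' x y := by
  rw [mem_pS] at h ⊢
  intro i
  rw [Pi.neg_apply]
  exact neg_mem_gZ' (h i)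

lemma pieces_disjoint {x y : Fin n → ℤ} (hx : IsSignVec x) (hy : IsSignVec y)
    {k k' l l' : ℤ} (hk : k = 1 ∨ k = -1)
    (hne : ¬(k = l ∧ k' = l')) :
    Disjoint ((pS (gC k) x y ∩ pS (gC' k') x y) \ (pS gZ x y ∪ pS gZ' x y))
             ((pS (gC l) x y ∩ pS (gC' l') x y) \ (pS gZ x y ∪ pS gZ' x y)) := by
  rw [Finset.disjoint_left]
  intro s hs1 hs2
  rw [Finset.mem_sdiff, Finset.mem_inter] at hs1 hs2
  obtain ⟨⟨hk1, hk1'⟩, hz1⟩ := hs1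
  obtain ⟨⟨hl1, hl1'⟩, -⟩ := hs2
  rw [Finset.mem_union] at hz1
  push_neg at hz1
  obtain ⟨hzx, hzy⟩ := hz1
  have hssv : IsSignVec s := fun i => mem_sgns.1 (gC_subset_sgns hk (hx i) _ (mem_pS.1 hk1 i))
  obtain ⟨i, hxi, hsi⟩ := exists_ne_of_not_mem_pS_gZ hssv hzx
  obtain ⟨j, hyj, hsj⟩ := exists_ne_of_not_mem_pS_gZ' hssv hzy
  apply hne
  constructor
  · have h1 := mem_pS.1 hk1 i
    have h2 := mem_pS.1 hl1 i
    unfold gC at h1 h2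
    rw [if_neg hxi] at h1 h2
    simp only [Finset.mem_insert, Finset.mem_singleton] at h1 h2
    rcases h1 with h1 | h1
    · exact absurd h1 hsi
    rcases h2 with h2 | h2
    · exact absurd h2 hsi
    exact mul_right_cancel₀ hxi (h1.symm.trans h2)
  · have h1 := mem_pS.1 hk1' j
    have h2 := mem_pS.1 hl1' j
    unfold gC' at h1 h2
    rw [if_neg hyj] at h1 h2
    simp only [Finset.mem_insert, Finset.mem_singleton] at h1 h2
    rcases h1 with h1 | h1
    · exact absurd h1 hsj
    rcases h2 with h2 | h2
    · exact absurd h2 hsj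
    exact mul_right_cancel₀ hyj (h1.symm.trans h2)

end Stmt13Aux

open Finset Stmt13Aux

theorem stmt13 {n : ℕ} (x y : Fin n → ℤ) (hx : x ∈ ZS n) (hy : y ∈ ZS n) (hxy : x ≠ y)
    (a₁ a₂ b₁ b₂ c : ℕ)
    (ha₁ : a₁ = (Finset.univ.filter (fun i => x i = 1 ∧ y i = 1)).card)
    (ha₂ : a₂ = (Finset.univ.filter (fun i => x i = 1 ∧ y i = -1)).card)
    (hb₁ : b₁ = (Finset.univ.filter (fun i => x i = 1 ∧ y i = 0)).card)
    (hb₂ : b₂ = (Finset.univ.filter (fun i => x i = 0 ∧ y i = 1)).card)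
    (hc : c = (Finset.univ.filter (fun i => x i = 0 ∧ y i = 0)).card)
    (hsum : a₁ + a₂ + b₁ + b₂ + c = n) :
    ((ZE {x, y}).ncard : ℤ) =
      3 ^ c * (3 ^ b₁ * 2 ^ (a₁ + a₂ + b₂) + 3 ^ b₂ * 2 ^ (a₁ + a₂ + b₁)
        - 2 ^ (b₁ + b₂) * (2 ^ a₁ + 2 ^ a₂)
        - 3 ^ b₁ - 3 ^ b₂ + 2 ^ (b₁ + 1) + 2 ^ (b₂ + 1) - 2) := by
  classical
  obtain ⟨hxsv, -⟩ := hx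
  obtain ⟨hysv, -⟩ := hy
  clear hxy
  -- the five column classes partition `univ`
  set F1 := Finset.univ.filter (fun i => x i = 1 ∧ y i = 1) with hF1
  set F2 := Finset.univ.filter (fun i => x i = 1 ∧ y i = -1) with hF2
  set F3 := Finset.univ.filter (fun i => x i = 1 ∧ y i = 0) with hF3
  set F4 := Finset.univ.filter (fun i => x i = 0 ∧ y i = 1) with hF4
  set F5 := Finset.univ.filter (fun i => x i = 0 ∧ y i = 0) with hF5
  have hdis : ∀ (p q : Fin n → Prop) (_ : DecidablePred p) (_ : DecidablePred q),
      (∀ i, p i → q i → False) →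
      Disjoint (Finset.univ.filter p) (Finset.univ.filter q) := by
    intro p q _ _ h
    rw [Finset.disjoint_left]
    intro i h1 h2
    rw [Finset.mem_filter] at h1 h2
    exact h i h1.2 h2.2
  have d12 : Disjoint F1 F2 := by
    rw [hF1, hF2]; exact hdis _ _ _ _ (fun i h1 h2 => by omega)
  have d13 : Disjoint F1 F3 := by
    rw [hF1, hF3]; exact hdis _ _ _ _ (fun i h1 h2 => by omega)
  have d14 : Disjoint F1 F4 := by
    rw [hF1, hF4]; exact hdis _ _ _ _ (fun i h1 h2 => by omega)
  have d15 : Disjoint F1 F5 := by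
    rw [hF1, hF5]; exact hdis _ _ _ _ (fun i h1 h2 => by omega)
  have d23 : Disjoint F2 F3 := by
    rw [hF2, hF3]; exact hdis _ _ _ _ (fun i h1 h2 => by omega)
  have d24 : Disjoint F2 F4 := by
    rw [hF2, hF4]; exact hdis _ _ _ _ (fun i h1 h2 => by omega)
  have d25 : Disjoint F2 F5 := by
    rw [hF2, hF5]; exact hdis _ _ _ _ (fun i h1 h2 => by omega)
  have d34 : Disjoint F3 F4 := by
    rw [hF3, hF4]; exact hdis _ _ _ _ (fun i h1 h2 => by omega)
  have d35 : Disjoint F3 F5 := by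
    rw [hF3, hF5]; exact hdis _ _ _ _ (fun i h1 h2 => by omega)
  have d45 : Disjoint F4 F5 := by
    rw [hF4, hF5]; exact hdis _ _ _ _ (fun i h1 h2 => by omega)
  have dU1 : Disjoint (F1 ∪ F2) F3 := Finset.disjoint_union_left.2 ⟨d13, d23⟩
  have dU2 : Disjoint (F1 ∪ F2 ∪ F3) F4 :=
    Finset.disjoint_union_left.2 ⟨Finset.disjoint_union_left.2 ⟨d14, d24⟩, d34⟩
  have dU3 : Disjoint (F1 ∪ F2 ∪ F3 ∪ F4) F5 :=
    Finset.disjoint_union_left.2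
      ⟨Finset.disjoint_union_left.2 ⟨Finset.disjoint_union_left.2 ⟨d15, d25⟩, d35⟩, d45⟩
  have hcover : F1 ∪ F2 ∪ F3 ∪ F4 ∪ F5 = Finset.univ := by
    apply Finset.eq_univ_of_card
    rw [Finset.card_union_of_disjoint dU3, Finset.card_union_of_disjoint dU2,
      Finset.card_union_of_disjoint dU1, Finset.card_union_of_disjoint d12, Fintype.card_fin]
    omega
  have prodlem : ∀ u : ℤ → ℤ → ℕ,
      (∏ i, u (x i) (y i)) =
        u 1 1 ^ a₁ * u 1 (-1) ^ a₂ * u 1 0 ^ b₁ * u 0 1 ^ b₂ * u 0 0 ^ c := by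
    intro u
    have h0 : (∏ i, u (x i) (y i)) = ∏ i ∈ F1 ∪ F2 ∪ F3 ∪ F4 ∪ F5, u (x i) (y i) := by
      rw [hcover]
    have c1 : ∀ i ∈ F1, u (x i) (y i) = u 1 1 := by
      intro i hi; rw [hF1, Finset.mem_filter] at hi; rw [hi.2.1, hi.2.2]
    have c2 : ∀ i ∈ F2, u (x i) (y i) = u 1 (-1) := by
      intro i hi; rw [hF2, Finset.mem_filter] at hi; rw [hi.2.1, hi.2.2]
    have c3 : ∀ i ∈ F3, u (x i) (y i) = u 1 0 := by
      intro i hi; rw [hF3, Finset.mem_filter] at hi; rw [hi.2.1, hi.2.2]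
    have c4 : ∀ i ∈ F4, u (x i) (y i) = u 0 1 := by
      intro i hi; rw [hF4, Finset.mem_filter] at hi; rw [hi.2.1, hi.2.2]
    have c5 : ∀ i ∈ F5, u (x i) (y i) = u 0 0 := by
      intro i hi; rw [hF5, Finset.mem_filter] at hi; rw [hi.2.1, hi.2.2]
    rw [h0, Finset.prod_union dU3, Finset.prod_union dU2, Finset.prod_union dU1,
      Finset.prod_union d12, Finset.prod_congr rfl c1, Finset.prod_congr rfl c2,
      Finset.prod_congr rfl c3, Finset.prod_congr rfl c4, Finset.prod_congr rfl c5,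
      Finset.prod_const, Finset.prod_const, Finset.prod_const, Finset.prod_const,
      Finset.prod_const, ← ha₁, ← ha₂, ← hb₁, ← hb₂, ← hc]
  have evalcard : ∀ (g : ℤ → ℤ → Finset ℤ) (v1 v2 v3 v4 v5 : ℕ),
      (g 1 1).card = v1 → (g 1 (-1)).card = v2 → (g 1 0).card = v3 →
      (g 0 1).card = v4 → (g 0 0).card = v5 →
      (pS g x y).card = v1 ^ a₁ * v2 ^ a₂ * v3 ^ b₁ * v4 ^ b₂ * v5 ^ c := by
    intro g v1 v2 v3 v4 v5 h1 h2 h3 h4 h5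
    rw [pS_card]
    have h := prodlem fun a b => (g a b).card
    simp only [h1, h2, h3, h4, h5] at h
    exact h
  -- the main finsets
  set Cx1 := pS (gC 1) x y with hCx1
  set Cxm := pS (gC (-1)) x y with hCxm
  set Cy1 := pS (gC' 1) x y with hCy1
  set Cym := pS (gC' (-1)) x y with hCym
  set Zx := pS gZ x y with hZx
  set Zy := pS gZ' x y with hZy
  set Ex := (Cx1 ∪ Cxm) \ Zx with hEx
  set Ey := (Cy1 ∪ Cym) \ Zy with hEy
  set E := Ex ∪ Ey with hE
  set S := E.filter posv with hS
  -- sign vector facts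
  have hsgnE : ∀ s ∈ E, IsSignVec s := by
    intro s hs i
    rw [← mem_sgns]
    rw [hE, Finset.mem_union, hEx, hEy, Finset.mem_sdiff, Finset.mem_sdiff,
      Finset.mem_union, Finset.mem_union] at hs
    rcases hs with ⟨h | h, -⟩ | ⟨h | h, -⟩
    · exact gC_subset_sgns (Or.inl rfl) (hxsv i) _ (mem_pS.1 h i)
    · exact gC_subset_sgns (Or.inr rfl) (hxsv i) _ (mem_pS.1 h i)
    · exact gC'_subset_sgns (Or.inl rfl) (hysv i) _ (mem_pS.1 h i)
    · exact gC'_subset_sgns (Or.inr rfl) (hysv i) _ (mem_pS.1 h i)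
  have hnzE : ∀ s ∈ E, ∃ i, s i ≠ 0 := by
    intro s hs
    have hssv := hsgnE s hs
    rw [hE, Finset.mem_union, hEx, hEy, Finset.mem_sdiff, Finset.mem_sdiff] at hs
    rcases hs with ⟨-, h⟩ | ⟨-, h⟩
    · obtain ⟨i, -, h2⟩ := exists_ne_of_not_mem_pS_gZ hssv h; exact ⟨i, h2⟩
    · obtain ⟨i, -, h2⟩ := exists_ne_of_not_mem_pS_gZ' hssv h; exact ⟨i, h2⟩
  have hnegE : ∀ s ∈ E, -s ∈ E := by
    intro s hs
    rw [hE, Finset.mem_union, hEx, hEy, Finset.mem_sdiff, Finset.mem_sdiff,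
      Finset.mem_union, Finset.mem_union] at hs ⊢
    have hZx' : s ∉ Zx → -s ∉ Zx := by
      intro h hneg
      apply h
      have := neg_mem_pS_gZ hneg
      rwa [neg_neg] at this
    have hZy' : s ∉ Zy → -s ∉ Zy := by
      intro h hneg
      apply h
      have := neg_mem_pS_gZ' hneg
      rwa [neg_neg] at this
    rcases hs with ⟨h | h, h2⟩ | ⟨h | h, h2⟩
    · exact Or.inl ⟨Or.inr (neg_mem_pS_gC h), hZx' h2⟩
    · refine Or.inl ⟨Or.inl ?_, hZx' h2⟩
      have := neg_mem_pS_gC h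
      norm_num at this
      exact this
    · exact Or.inr ⟨Or.inr (neg_mem_pS_gC' h), hZy' h2⟩
    · refine Or.inr ⟨Or.inl ?_, hZy' h2⟩
      have := neg_mem_pS_gC' h
      norm_num at this
      exact this
  -- doubling
  have hdouble : E.card = 2 * S.card := by
    have h1 : (E.filter posv).card = (E.filter (fun s => ¬ posv s)).card := by
      apply Finset.card_nbij' (i := fun s => -s) (j := fun s => -s)
      · intro s hs
        rw [Finset.mem_coe, Finset.mem_filter] at hs ⊢
        exact ⟨hnegE s hs.1, fun hp => posv_not_both hs.2 hp⟩
      · intro s hs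
        rw [Finset.mem_coe, Finset.mem_filter] at hs ⊢
        refine ⟨hnegE s hs.1, ?_⟩
        rcases posv_total (hsgnE s hs.1) (hnzE s hs.1) with h | h
        · exact absurd h hs.2
        · exact h
      · intro s _; simp
      · intro s _; simp
    have h2 := Finset.card_filter_add_card_filter_not (s := E) (p := posv)
    rw [hS]
    omega
  -- identification with ZE
  have hZE : ZE {x, y} = ↑S := by
    ext s
    simp only [ZE, ZS, Set.mem_setOf_eq, Set.mem_insert_iff, Set.mem_singleton_iff,
      exists_eq_or_imp, exists_eq_left]
    constructor
    · rintro ⟨⟨hssv, hpos⟩, helim⟩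
      rw [Finset.mem_coe, hS, Finset.mem_filter]
      refine ⟨?_, hpos⟩
      rw [hE, Finset.mem_union]
      rcases helim with h | h
      · exact Or.inl ((elim_x_iff hxsv hssv).1 h)
      · exact Or.inr ((elim_y_iff hysv hssv).1 h)
    · intro h
      rw [Finset.mem_coe, hS, Finset.mem_filter] at h
      obtain ⟨hsE, hpos⟩ := h
      have hssv := hsgnE s hsE
      refine ⟨⟨hssv, hpos⟩, ?_⟩
      rw [hE, Finset.mem_union] at hsE
      rcases hsE with h | h
      · exact Or.inl ((elim_x_iff hxsv hssv).2 h)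
      · exact Or.inr ((elim_y_iff hysv hssv).2 h)
  -- inclusion-exclusion between Ex and Ey
  have e2 : E.card + (Ex ∩ Ey).card = Ex.card + Ey.card :=
    Finset.card_union_add_card_inter Ex Ey
  -- cards of Ex and Ey
  have hCinterx : Cx1 ∩ Cxm = Zx := by
    rw [hCx1, hCxm, hZx, ← pS_inter]
    apply pS_congr
    intro a b
    unfold gC gZ
    split_ifs with h
    · exact Finset.inter_self _
    · ext e
      simp only [Finset.mem_inter, Finset.mem_insert, Finset.mem_singleton, one_mul,
        neg_one_mul]
      omega
  have hCintery : Cy1 ∩ Cym = Zy := by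
    rw [hCy1, hCym, hZy, ← pS_inter]
    apply pS_congr
    intro a b
    unfold gC' gZ'
    split_ifs with h
    · exact Finset.inter_self _
    · ext e
      simp only [Finset.mem_inter, Finset.mem_insert, Finset.mem_singleton, one_mul,
        neg_one_mul]
      omega
  have hZsubx : Zx ⊆ Cx1 ∪ Cxm := by
    have h1 : Zx ⊆ Cx1 := pS_subset x y (gZ_subset_gC 1)
    exact h1.trans Finset.subset_union_left
  have hZsuby : Zy ⊆ Cy1 ∪ Cym := by
    have h1 : Zy ⊆ Cy1 := pS_subset x y (gZ'_subset_gC' 1)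
    exact h1.trans Finset.subset_union_left
  have e3 : Ex.card + Zx.card = (Cx1 ∪ Cxm).card := by
    rw [hEx]; exact Finset.card_sdiff_add_card_eq_card hZsubx
  have e4 : (Cx1 ∪ Cxm).card + Zx.card = Cx1.card + Cxm.card := by
    have h := Finset.card_union_add_card_inter Cx1 Cxm
    rwa [hCinterx] at h
  have e5 : Ey.card + Zy.card = (Cy1 ∪ Cym).card := by
    rw [hEy]; exact Finset.card_sdiff_add_card_eq_card hZsuby
  have e6 : (Cy1 ∪ Cym).card + Zy.card = Cy1.card + Cym.card := by
    have h := Finset.card_union_add_card_inter Cy1 Cym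
    rwa [hCintery] at h
  -- four pieces of Ex ∩ Ey
  set P11 := (Cx1 ∩ Cy1) \ (Zx ∪ Zy) with hP11
  set P1m := (Cx1 ∩ Cym) \ (Zx ∪ Zy) with hP1m
  set Pm1 := (Cxm ∩ Cy1) \ (Zx ∪ Zy) with hPm1
  set Pmm := (Cxm ∩ Cym) \ (Zx ∪ Zy) with hPmm
  have hsplit : Ex ∩ Ey = P11 ∪ P1m ∪ Pm1 ∪ Pmm := by
    rw [hEx, hEy, hP11, hP1m, hPm1, hPmm]
    ext s
    simp only [Finset.mem_inter, Finset.mem_sdiff, Finset.mem_union, not_or]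
    constructor
    · rintro ⟨⟨h1 | h1, hz1⟩, ⟨h2 | h2, hz2⟩⟩
      · exact Or.inl (Or.inl (Or.inl ⟨⟨h1, h2⟩, hz1, hz2⟩))
      · exact Or.inl (Or.inl (Or.inr ⟨⟨h1, h2⟩, hz1, hz2⟩))
      · exact Or.inl (Or.inr ⟨⟨h1, h2⟩, hz1, hz2⟩)
      · exact Or.inr ⟨⟨h1, h2⟩, hz1, hz2⟩
    · rintro (((⟨⟨h1, h2⟩, hz1, hz2⟩ | ⟨⟨h1, h2⟩, hz1, hz2⟩) | ⟨⟨h1, h2⟩, hz1, hz2⟩) |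
        ⟨⟨h1, h2⟩, hz1, hz2⟩)
      · exact ⟨⟨Or.inl h1, hz1⟩, Or.inl h2, hz2⟩
      · exact ⟨⟨Or.inl h1, hz1⟩, Or.inr h2, hz2⟩
      · exact ⟨⟨Or.inr h1, hz1⟩, Or.inl h2, hz2⟩
      · exact ⟨⟨Or.inr h1, hz1⟩, Or.inr h2, hz2⟩
  have dp1 : Disjoint P11 P1m := by
    rw [hP11, hP1m, hCx1, hCy1, hCym, hZx, hZy]
    exact pieces_disjoint hxsv hysv (Or.inl rfl) (by decide)
  have dp2 : Disjoint P11 Pm1 := by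
    rw [hP11, hPm1, hCx1, hCxm, hCy1, hZx, hZy]
    exact pieces_disjoint hxsv hysv (Or.inl rfl) (by decide)
  have dp3 : Disjoint P11 Pmm := by
    rw [hP11, hPmm, hCx1, hCxm, hCy1, hCym, hZx, hZy]
    exact pieces_disjoint hxsv hysv (Or.inl rfl) (by decide)
  have dp4 : Disjoint P1m Pm1 := by
    rw [hP1m, hPm1, hCx1, hCxm, hCy1, hCym, hZx, hZy]
    exact pieces_disjoint hxsv hysv (Or.inl rfl) (by decide)
  have dp5 : Disjoint P1m Pmm := by
    rw [hP1m, hPmm, hCx1, hCxm, hCym, hZx, hZy]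
    exact pieces_disjoint hxsv hysv (Or.inl rfl) (by decide)
  have dp6 : Disjoint Pm1 Pmm := by
    rw [hPm1, hPmm, hCxm, hCy1, hCym, hZx, hZy]
    exact pieces_disjoint hxsv hysv (Or.inr rfl) (by decide)
  have e7 : (Ex ∩ Ey).card = P11.card + P1m.card + Pm1.card + Pmm.card := by
    rw [hsplit,
      Finset.card_union_of_disjoint
        (Finset.disjoint_union_left.2
          ⟨Finset.disjoint_union_left.2 ⟨dp3, dp5⟩, dp6⟩),
      Finset.card_union_of_disjoint (Finset.disjoint_union_left.2 ⟨dp2, dp4⟩),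
      Finset.card_union_of_disjoint dp1]
  -- piece counting: for each piece, card + (W + V) = D + ZZ
  have rgen : ∀ k k' : ℤ,
      ((pS (gC k) x y ∩ pS (gC' k') x y) \ (Zx ∪ Zy)).card
        + (((pS (gC k) x y ∩ pS (gC' k') x y) ∩ Zx).card
          + ((pS (gC k) x y ∩ pS (gC' k') x y) ∩ Zy).card)
        = (pS (gC k) x y ∩ pS (gC' k') x y).card + (Zx ∩ Zy).card := by
    intro k k'
    have hsubD : Zx ∩ Zy ⊆ pS (gC k) x y ∩ pS (gC' k') x y :=
      Finset.inter_subset_inter (pS_subset x y (gZ_subset_gC k))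
        (pS_subset x y (gZ'_subset_gC' k'))
    have hIZZ : ((pS (gC k) x y ∩ pS (gC' k') x y) ∩ Zx)
        ∩ ((pS (gC k) x y ∩ pS (gC' k') x y) ∩ Zy) = Zx ∩ Zy := by
      ext s
      simp only [Finset.mem_inter]
      constructor
      · tauto
      · intro hm
        have h3 := hsubD (Finset.mem_inter.2 ⟨hm.1, hm.2⟩)
        rw [Finset.mem_inter] at h3
        tauto
    have q1 := Finset.card_sdiff_add_card_inter
      (pS (gC k) x y ∩ pS (gC' k') x y) (Zx ∪ Zy)
    have hdistr : (pS (gC k) x y ∩ pS (gC' k') x y) ∩ (Zx ∪ Zy)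
        = ((pS (gC k) x y ∩ pS (gC' k') x y) ∩ Zx)
          ∪ ((pS (gC k) x y ∩ pS (gC' k') x y) ∩ Zy) :=
      Finset.inter_union_distrib_left _ _ _
    rw [hdistr] at q1
    have q2 := Finset.card_union_add_card_inter
      ((pS (gC k) x y ∩ pS (gC' k') x y) ∩ Zx)
      ((pS (gC k) x y ∩ pS (gC' k') x y) ∩ Zy)
    rw [hIZZ] at q2
    omega
  have r11 := rgen 1 1
  have r1m := rgen 1 (-1)
  have rm1 := rgen (-1) 1
  have rmm := rgen (-1) (-1)
  -- card values
  have vCx1 : Cx1.card = 2^a₁*2^a₂*2^b₁*3^b₂*3^c :=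
    evalcard _ 2 2 2 3 3 (by decide) (by decide) (by decide) (by decide) (by decide)
  have vCxm : Cxm.card = 2^a₁*2^a₂*2^b₁*3^b₂*3^c :=
    evalcard _ 2 2 2 3 3 (by decide) (by decide) (by decide) (by decide) (by decide)
  have vCy1 : Cy1.card = 2^a₁*2^a₂*3^b₁*2^b₂*3^c :=
    evalcard _ 2 2 3 2 3 (by decide) (by decide) (by decide) (by decide) (by decide)
  have vCym : Cym.card = 2^a₁*2^a₂*3^b₁*2^b₂*3^c :=
    evalcard _ 2 2 3 2 3 (by decide) (by decide) (by decide) (by decide) (by decide)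
  have vZx : Zx.card = 1^a₁*1^a₂*1^b₁*3^b₂*3^c :=
    evalcard _ 1 1 1 3 3 (by decide) (by decide) (by decide) (by decide) (by decide)
  have vZy : Zy.card = 1^a₁*1^a₂*3^b₁*1^b₂*3^c :=
    evalcard _ 1 1 3 1 3 (by decide) (by decide) (by decide) (by decide) (by decide)
  have hZZeq : Zx ∩ Zy = pS (fun a b => gZ a b ∩ gZ' a b) x y := (pS_inter _ _ x y).symm
  have vZZ : (Zx ∩ Zy).card = 1^a₁*1^a₂*1^b₁*1^b₂*3^c := by
    rw [hZZeq]
    exact evalcard _ 1 1 1 1 3 (by decide) (by decide) (by decide) (by decide) (by decide)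
  have hDeq : ∀ k k' : ℤ, pS (gC k) x y ∩ pS (gC' k') x y
      = pS (fun a b => gC k a b ∩ gC' k' a b) x y := fun k k' => (pS_inter _ _ x y).symm
  have hWeq : ∀ k k' : ℤ, (pS (gC k) x y ∩ pS (gC' k') x y) ∩ Zx
      = pS (fun a b => gC k a b ∩ gC' k' a b ∩ gZ a b) x y := fun k k' =>
    (pS_inter3 _ _ _ x y).symm
  have hVeq : ∀ k k' : ℤ, (pS (gC k) x y ∩ pS (gC' k') x y) ∩ Zy
      = pS (fun a b => gC k a b ∩ gC' k' a b ∩ gZ' a b) x y := fun k k' =>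
    (pS_inter3 _ _ _ x y).symm
  have vD11 : (pS (gC 1) x y ∩ pS (gC' 1) x y).card = 2^a₁*1^a₂*2^b₁*2^b₂*3^c := by
    rw [hDeq]
    exact evalcard _ 2 1 2 2 3 (by decide) (by decide) (by decide) (by decide) (by decide)
  have vDmm : (pS (gC (-1)) x y ∩ pS (gC' (-1)) x y).card = 2^a₁*1^a₂*2^b₁*2^b₂*3^c := by
    rw [hDeq]
    exact evalcard _ 2 1 2 2 3 (by decide) (by decide) (by decide) (by decide) (by decide)
  have vD1m : (pS (gC 1) x y ∩ pS (gC' (-1)) x y).card = 1^a₁*2^a₂*2^b₁*2^b₂*3^c := by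
    rw [hDeq]
    exact evalcard _ 1 2 2 2 3 (by decide) (by decide) (by decide) (by decide) (by decide)
  have vDm1 : (pS (gC (-1)) x y ∩ pS (gC' 1) x y).card = 1^a₁*2^a₂*2^b₁*2^b₂*3^c := by
    rw [hDeq]
    exact evalcard _ 1 2 2 2 3 (by decide) (by decide) (by decide) (by decide) (by decide)
  have vW11 : ((pS (gC 1) x y ∩ pS (gC' 1) x y) ∩ Zx).card = 1^a₁*1^a₂*1^b₁*2^b₂*3^c := by
    rw [hWeq]
    exact evalcard _ 1 1 1 2 3 (by decide) (by decide) (by decide) (by decide) (by decide)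
  have vW1m : ((pS (gC 1) x y ∩ pS (gC' (-1)) x y) ∩ Zx).card = 1^a₁*1^a₂*1^b₁*2^b₂*3^c := by
    rw [hWeq]
    exact evalcard _ 1 1 1 2 3 (by decide) (by decide) (by decide) (by decide) (by decide)
  have vWm1 : ((pS (gC (-1)) x y ∩ pS (gC' 1) x y) ∩ Zx).card = 1^a₁*1^a₂*1^b₁*2^b₂*3^c := by
    rw [hWeq]
    exact evalcard _ 1 1 1 2 3 (by decide) (by decide) (by decide) (by decide) (by decide)
  have vWmm : ((pS (gC (-1)) x y ∩ pS (gC' (-1)) x y) ∩ Zx).card = 1^a₁*1^a₂*1^b₁*2^b₂*3^c := by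
    rw [hWeq]
    exact evalcard _ 1 1 1 2 3 (by decide) (by decide) (by decide) (by decide) (by decide)
  have vV11 : ((pS (gC 1) x y ∩ pS (gC' 1) x y) ∩ Zy).card = 1^a₁*1^a₂*2^b₁*1^b₂*3^c := by
    rw [hVeq]
    exact evalcard _ 1 1 2 1 3 (by decide) (by decide) (by decide) (by decide) (by decide)
  have vV1m : ((pS (gC 1) x y ∩ pS (gC' (-1)) x y) ∩ Zy).card = 1^a₁*1^a₂*2^b₁*1^b₂*3^c := by
    rw [hVeq]
    exact evalcard _ 1 1 2 1 3 (by decide) (by decide) (by decide) (by decide) (by decide)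
  have vVm1 : ((pS (gC (-1)) x y ∩ pS (gC' 1) x y) ∩ Zy).card = 1^a₁*1^a₂*2^b₁*1^b₂*3^c := by
    rw [hVeq]
    exact evalcard _ 1 1 2 1 3 (by decide) (by decide) (by decide) (by decide) (by decide)
  have vVmm : ((pS (gC (-1)) x y ∩ pS (gC' (-1)) x y) ∩ Zy).card = 1^a₁*1^a₂*2^b₁*1^b₂*3^c := by
    rw [hVeq]
    exact evalcard _ 1 1 2 1 3 (by decide) (by decide) (by decide) (by decide) (by decide)
  -- assemble over ℤ
  rw [hZE, Set.ncard_coe_finset]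
  have h1z : ((E.card : ℤ)) = 2 * (S.card : ℤ) := by exact_mod_cast hdouble
  have h2z : ((E.card : ℤ)) + ((Ex ∩ Ey).card : ℤ) = (Ex.card : ℤ) + (Ey.card : ℤ) := by
    exact_mod_cast e2
  have h3z : ((Ex.card : ℤ)) + (Zx.card : ℤ) = (((Cx1 ∪ Cxm).card : ℤ)) := by exact_mod_cast e3
  have h4z : (((Cx1 ∪ Cxm).card : ℤ)) + (Zx.card : ℤ) = (Cx1.card : ℤ) + (Cxm.card : ℤ) := by
    exact_mod_cast e4
  have h5z : ((Ey.card : ℤ)) + (Zy.card : ℤ) = (((Cy1 ∪ Cym).card : ℤ)) := by exact_mod_cast e5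
  have h6z : (((Cy1 ∪ Cym).card : ℤ)) + (Zy.card : ℤ) = (Cy1.card : ℤ) + (Cym.card : ℤ) := by
    exact_mod_cast e6
  have h7z : (((Ex ∩ Ey).card : ℤ)) = (P11.card : ℤ) + (P1m.card : ℤ) + (Pm1.card : ℤ)
      + (Pmm.card : ℤ) := by exact_mod_cast e7
  have r11z : ((P11.card : ℤ))
      + ((((pS (gC 1) x y ∩ pS (gC' 1) x y) ∩ Zx).card : ℤ)
        + (((pS (gC 1) x y ∩ pS (gC' 1) x y) ∩ Zy).card : ℤ))
      = (((pS (gC 1) x y ∩ pS (gC' 1) x y).card : ℤ)) + ((Zx ∩ Zy).card : ℤ) := by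
    exact_mod_cast r11
  have r1mz : ((P1m.card : ℤ))
      + ((((pS (gC 1) x y ∩ pS (gC' (-1)) x y) ∩ Zx).card : ℤ)
        + (((pS (gC 1) x y ∩ pS (gC' (-1)) x y) ∩ Zy).card : ℤ))
      = (((pS (gC 1) x y ∩ pS (gC' (-1)) x y).card : ℤ)) + ((Zx ∩ Zy).card : ℤ) := by
    exact_mod_cast r1m
  have rm1z : ((Pm1.card : ℤ))
      + ((((pS (gC (-1)) x y ∩ pS (gC' 1) x y) ∩ Zx).card : ℤ)
        + (((pS (gC (-1)) x y ∩ pS (gC' 1) x y) ∩ Zy).card : ℤ))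
      = (((pS (gC (-1)) x y ∩ pS (gC' 1) x y).card : ℤ)) + ((Zx ∩ Zy).card : ℤ) := by
    exact_mod_cast rm1
  have rmmz : ((Pmm.card : ℤ))
      + ((((pS (gC (-1)) x y ∩ pS (gC' (-1)) x y) ∩ Zx).card : ℤ)
        + (((pS (gC (-1)) x y ∩ pS (gC' (-1)) x y) ∩ Zy).card : ℤ))
      = (((pS (gC (-1)) x y ∩ pS (gC' (-1)) x y).card : ℤ)) + ((Zx ∩ Zy).card : ℤ) := by
    exact_mod_cast rmm
  have vCx1z : ((Cx1.card : ℤ)) = 2^a₁*2^a₂*2^b₁*3^b₂*3^c := by exact_mod_cast vCx1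
  have vCxmz : ((Cxm.card : ℤ)) = 2^a₁*2^a₂*2^b₁*3^b₂*3^c := by exact_mod_cast vCxm
  have vCy1z : ((Cy1.card : ℤ)) = 2^a₁*2^a₂*3^b₁*2^b₂*3^c := by exact_mod_cast vCy1
  have vCymz : ((Cym.card : ℤ)) = 2^a₁*2^a₂*3^b₁*2^b₂*3^c := by exact_mod_cast vCym
  have vZxz : ((Zx.card : ℤ)) = 1^a₁*1^a₂*1^b₁*3^b₂*3^c := by exact_mod_cast vZx
  have vZyz : ((Zy.card : ℤ)) = 1^a₁*1^a₂*3^b₁*1^b₂*3^c := by exact_mod_cast vZy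
  have vZZz : (((Zx ∩ Zy).card : ℤ)) = 1^a₁*1^a₂*1^b₁*1^b₂*3^c := by exact_mod_cast vZZ
  have vD11z : (((pS (gC 1) x y ∩ pS (gC' 1) x y).card : ℤ)) = 2^a₁*1^a₂*2^b₁*2^b₂*3^c := by
    exact_mod_cast vD11
  have vDmmz : (((pS (gC (-1)) x y ∩ pS (gC' (-1)) x y).card : ℤ)) = 2^a₁*1^a₂*2^b₁*2^b₂*3^c := by
    exact_mod_cast vDmm
  have vD1mz : (((pS (gC 1) x y ∩ pS (gC' (-1)) x y).card : ℤ)) = 1^a₁*2^a₂*2^b₁*2^b₂*3^c := by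
    exact_mod_cast vD1m
  have vDm1z : (((pS (gC (-1)) x y ∩ pS (gC' 1) x y).card : ℤ)) = 1^a₁*2^a₂*2^b₁*2^b₂*3^c := by
    exact_mod_cast vDm1
  have vW11z : ((((pS (gC 1) x y ∩ pS (gC' 1) x y) ∩ Zx).card : ℤ)) = 1^a₁*1^a₂*1^b₁*2^b₂*3^c := by
    exact_mod_cast vW11
  have vW1mz : ((((pS (gC 1) x y ∩ pS (gC' (-1)) x y) ∩ Zx).card : ℤ)) = 1^a₁*1^a₂*1^b₁*2^b₂*3^c := by
    exact_mod_cast vW1m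
  have vWm1z : ((((pS (gC (-1)) x y ∩ pS (gC' 1) x y) ∩ Zx).card : ℤ)) = 1^a₁*1^a₂*1^b₁*2^b₂*3^c := by
    exact_mod_cast vWm1
  have vWmmz : ((((pS (gC (-1)) x y ∩ pS (gC' (-1)) x y) ∩ Zx).card : ℤ)) = 1^a₁*1^a₂*1^b₁*2^b₂*3^c := by
    exact_mod_cast vWmm
  have vV11z : ((((pS (gC 1) x y ∩ pS (gC' 1) x y) ∩ Zy).card : ℤ)) = 1^a₁*1^a₂*2^b₁*1^b₂*3^c := by
    exact_mod_cast vV11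
  have vV1mz : ((((pS (gC 1) x y ∩ pS (gC' (-1)) x y) ∩ Zy).card : ℤ)) = 1^a₁*1^a₂*2^b₁*1^b₂*3^c := by
    exact_mod_cast vV1m
  have vVm1z : ((((pS (gC (-1)) x y ∩ pS (gC' 1) x y) ∩ Zy).card : ℤ)) = 1^a₁*1^a₂*2^b₁*1^b₂*3^c := by
    exact_mod_cast vVm1
  have vVmmz : ((((pS (gC (-1)) x y ∩ pS (gC' (-1)) x y) ∩ Zy).card : ℤ)) = 1^a₁*1^a₂*2^b₁*1^b₂*3^c := by
    exact_mod_cast vVmm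
  have key : (2 : ℤ) * (S.card : ℤ)
      = 2 * (3 ^ c * (3 ^ b₁ * 2 ^ (a₁ + a₂ + b₂) + 3 ^ b₂ * 2 ^ (a₁ + a₂ + b₁)
        - 2 ^ (b₁ + b₂) * (2 ^ a₁ + 2 ^ a₂)
        - 3 ^ b₁ - 3 ^ b₂ + 2 ^ (b₁ + 1) + 2 ^ (b₂ + 1) - 2)) := by
    linear_combination (-1 : ℤ) * h1z + h2z + h3z + h4z + h5z + h6z - h7z
      - r11z - r1mz - rm1z - rmmz
      - 2 * vZxz - 2 * vZyz + vCx1z + vCxmz + vCy1z + vCymz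
      - vD11z - vD1mz - vDm1z - vDmmz - 4 * vZZz
      + vW11z + vW1mz + vWm1z + vWmmz + vV11z + vV1mz + vVm1z + vVmmz
  linarith [key]
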